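/- Let β1, β0, γ0 be rational numbers with β1 ≠ 0, γ0 ≠ 0 and β1 n + β0 ≠ 0 for every integer n ≥ 0. If (u_n)_{n≥-1} is a minimal solution of the recurrence u_n = (β1 n + β0) u_{n-1} + γ0 u_{n-2} (n ≥ 1), then u_{-1} ≠ 0 and the ratio u_0/u_{-1} is irrational. -/

import Mathlib

open Filter

/-- `u` solves the second-order recurrence `p n * u n = q n * u (n-1) + r n * u (n-2)`
for all `n ≥ 1`. -/
def IsSol (p q r u : ℤ → ℝ) : Prop :=
  ∀ n : ℤ, 1 ≤ n → p n * u n = q n * u (n - 1) + r n * u (n - 2)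

/-- A sequence (indexed from `-1`) is nontrivial if it is not identically zero. -/
def SeqNontrivial (u : ℤ → ℝ) : Prop :=
  ∃ n : ℤ, -1 ≤ n ∧ u n ≠ 0

/-- Linear independence of two sequences indexed from `-1`. -/
def SeqLinIndep (u v : ℤ → ℝ) : Prop :=
  ∀ c d : ℝ, (∀ n : ℤ, -1 ≤ n → c * u n + d * v n = 0) → c = 0 ∧ d = 0

/-- A nontrivial solution `u` of the recurrence is minimal if there is another solution `v`,
linearly independent from `u`, with `u n / v n → 0`. -/
def IsMinimal (p q r u : ℤ → ℝ) : Prop :=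
  IsSol p q r u ∧ SeqNontrivial u ∧
    ∃ v : ℤ → ℝ, IsSol p q r v ∧ SeqLinIndep u v ∧
      Tendsto (fun n : ℕ => u (n : ℤ) / v (n : ℤ)) atTop (nhds 0)

def RecR (q : ℕ → ℝ) (g : ℝ) (W : ℕ → ℝ) : Prop :=
  ∀ k : ℕ, W (k + 2) = q k * W (k + 1) + g * W k

lemma rec_unique {q : ℕ → ℝ} {g : ℝ} {W₁ W₂ : ℕ → ℝ} (h₁ : RecR q g W₁)
    (h₂ : RecR q g W₂) (e0 : W₁ 0 = W₂ 0) (e1 : W₁ 1 = W₂ 1) : ∀ k, W₁ k = W₂ k := by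
  have key : ∀ k, W₁ k = W₂ k ∧ W₁ (k + 1) = W₂ (k + 1) := by
    intro k
    induction k with
    | zero => exact ⟨e0, e1⟩
    | succ n ih => exact ⟨ih.2, by rw [h₁ n, h₂ n, ih.1, ih.2]⟩
  exact fun k => (key k).1

lemma rec_back_zero {q : ℕ → ℝ} {g : ℝ} (hg : g ≠ 0) {W : ℕ → ℝ} (h : RecR q g W) :
    ∀ k, W k = 0 → W (k + 1) = 0 → W 0 = 0 ∧ W 1 = 0 := by
  intro k
  induction k with
  | zero => exact fun h0 h1 => ⟨h0, h1⟩
  | succ n ih =>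
    intro h0 h1
    have hn : W n = 0 := by
      have h2 := h n
      rw [h1, h0] at h2
      have h3 : g * W n = 0 := by linarith
      exact (mul_eq_zero.mp h3).resolve_left hg
    exact ih hn h0

lemma casoratian {q : ℕ → ℝ} {g : ℝ} {X V : ℕ → ℝ} (hX : RecR q g X) (hV : RecR q g V) :
    ∀ k, X (k + 1) * V k - X k * V (k + 1) = (-g) ^ k * (X 1 * V 0 - X 0 * V 1) := by
  intro k
  induction k with
  | zero => simp
  | succ n ih =>
    rw [hX n, hV n, pow_succ, mul_comm ((-g)^n) (-g), mul_assoc, ← ih]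
    ring

lemma rec_growth {q : ℕ → ℝ} {g : ℝ} (hg : g ≠ 0)
    (hq : Tendsto (fun k => |q k|) atTop atTop)
    {X V : ℕ → ℝ} (hX : RecR q g X) (hV : RecR q g V)
    (hw0 : X 1 * V 0 - X 0 * V 1 ≠ 0)
    (hlim : Tendsto (fun k => X k / V k) atTop (nhds 0)) :
    ∀ R : ℝ, 0 < R → ∃ N, V N ≠ 0 ∧ ∀ n, N ≤ n → V (n + 1) ≠ 0 ∧ R * |V n| ≤ |V (n + 1)| := by
  intro R hR
  set w0 := X 1 * V 0 - X 0 * V 1 with hw0def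
  obtain ⟨N₀, hN₀⟩ : ∃ N₀, ∀ n, N₀ ≤ n → max R 1 + |g| ≤ |q n| :=
    (hq.eventually_ge_atTop (max R 1 + |g|)).exists_forall_of_atTop
  -- Step 1: there is a "good" index n₁ ≥ N₀ : V (n₁+1) ≠ 0 and |V n₁| ≤ |V (n₁+1)|
  have hgood : ∃ n₁, N₀ ≤ n₁ ∧ V (n₁ + 1) ≠ 0 ∧ |V n₁| ≤ |V (n₁ + 1)| := by
    by_contra hbad
    push_neg at hbad
    have hnz : ∀ n, N₀ ≤ n → V (n + 1) ≠ 0 := by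
      intro n hn h0
      have h2 : V (n + 2) ≠ 0 := by
        intro h2
        have := rec_back_zero hg hV (n + 1) h0 h2
        apply hw0
        rw [hw0def, this.1, this.2]; ring
      have h4 := hbad (n + 1) (by omega) h2
      have h5 : |V (n + 1 + 1)| < 0 := by simpa [h0] using h4
      exact absurd h5 (not_lt.mpr (abs_nonneg _))
    have hdec : ∀ n, N₀ ≤ n → |V (n + 1)| < |V n| :=
      fun n hn => hbad n hn (hnz n hn)
    have hVpos : ∀ n, N₀ ≤ n → 0 < |V n| :=
      fun n hn => lt_of_le_of_lt (abs_nonneg _) (hdec n hn)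
    have hgpos : 0 < |g| := abs_pos.mpr hg
    obtain ⟨ρ, hρpos, hρsq⟩ : ∃ ρ : ℝ, 0 < ρ ∧ ρ ^ 2 = |g| / 4 :=
      ⟨Real.sqrt |g| / 2, by positivity, by
        rw [div_pow, Real.sq_sqrt (abs_nonneg g)]; norm_num⟩
    obtain ⟨M₂', hM₂'⟩ : ∃ M, ∀ n, M ≤ n → (1 + |g|) / ρ ≤ |q n| :=
      (hq.eventually_ge_atTop _).exists_forall_of_atTop
    obtain ⟨M₃', hM₃'⟩ : ∃ M, ∀ k, M ≤ k → |X k / V k| < 1 := by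
      have h0 : Tendsto (fun k => |X k / V k|) atTop (nhds 0) := by
        simpa using hlim.abs
      exact (h0.eventually_lt_const one_pos).exists_forall_of_atTop
    set P := max (max M₂' M₃') N₀ with hPdef
    have hPN₀ : N₀ ≤ P := le_max_right _ _
    have hcontract : ∀ n, P ≤ n → |V (n + 1)| ≤ ρ * |V n| := by
      intro n hn
      have hqn : (1 + |g|) / ρ ≤ |q n| :=
        hM₂' n (le_trans (le_trans (le_max_left _ _) (le_max_left _ _)) hn)
      have hqpos : 0 < |q n| := lt_of_lt_of_le (by positivity) hqn
      have hstep : |q n| * |V (n + 1)| ≤ (1 + |g|) * |V n| := by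
        have hr : q n * V (n + 1) = V (n + 2) - g * V n := by rw [hV n]; ring
        calc |q n| * |V (n + 1)| = |q n * V (n + 1)| := (abs_mul _ _).symm
          _ = |V (n + 2) - g * V n| := by rw [hr]
          _ ≤ |V (n + 2)| + |g * V n| := abs_sub _ _
          _ ≤ |V n| + |g| * |V n| := by
              have h1 : |V (n + 2)| ≤ |V n| :=
                le_of_lt (lt_trans (hdec (n+1) (by omega)) (hdec n (le_trans hPN₀ hn)))
              rw [abs_mul]; linarith
          _ = (1 + |g|) * |V n| := by ring
      have h2 : (1 + |g|) * |V n| ≤ |q n| * (ρ * |V n|) := by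
        have h3 : (1 + |g|) ≤ ρ * |q n| := by
          rw [div_le_iff₀ hρpos] at hqn; linarith
        nlinarith [abs_nonneg (V n)]
      exact le_of_mul_le_mul_left (le_trans hstep h2) hqpos
    have hXle : ∀ k, P ≤ k → |X k| ≤ |V k| := by
      intro k hk
      have h1 : |X k / V k| < 1 :=
        hM₃' k (le_trans (le_trans (le_max_right _ _) (le_max_left _ _)) hk)
      have h2 : V k ≠ 0 := by
        rcases Nat.exists_eq_add_of_le (le_trans hPN₀ hk) with ⟨m, rfl⟩
        rcases Nat.eq_zero_or_pos m with rfl | hm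
        · exact abs_pos.mp (by simpa using hVpos N₀ le_rfl)
        · have he : N₀ + m = N₀ + (m - 1) + 1 := by omega
          rw [he]; exact hnz (N₀ + (m-1)) (by omega)
      rw [abs_div, div_lt_one (abs_pos.mpr h2)] at h1
      exact le_of_lt h1
    have hVdecay : ∀ m, |V (P + m)| ≤ ρ ^ m * |V P| := by
      intro m
      induction m with
      | zero => simp
      | succ n ih =>
        have h1 : |V (P + n + 1)| ≤ ρ * |V (P + n)| := hcontract (P + n) (by omega)
        have h2 : ρ * |V (P + n)| ≤ ρ * (ρ ^ n * |V P|) :=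
          mul_le_mul_of_nonneg_left ih (le_of_lt hρpos)
        have he : P + (n + 1) = P + n + 1 := by omega
        rw [he]
        calc |V (P + n + 1)| ≤ ρ * (ρ ^ n * |V P|) := le_trans h1 h2
          _ = ρ ^ (n + 1) * |V P| := by ring
    have hbound : ∀ m, |g| ^ P * |w0| ≤ 2 * ρ * |V P| ^ 2 * (1/4 : ℝ) ^ m := by
      intro m
      have hcas := casoratian hX hV (P + m)
      have habs : |g| ^ (P + m) * |w0| ≤ 2 * ρ * |V (P + m)| ^ 2 := by
        have h0 : |(-g) ^ (P + m) * w0| = |g| ^ (P + m) * |w0| := by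
          rw [abs_mul, abs_pow, abs_neg]
        have h1 : |X (P + m + 1) * V (P + m) - X (P + m) * V (P + m + 1)|
            ≤ |X (P+m+1)| * |V (P+m)| + |X (P+m)| * |V (P+m+1)| := by
          refine le_trans (abs_sub _ _) ?_
          rw [abs_mul, abs_mul]
        have h2 : |X (P+m+1)| ≤ |V (P+m+1)| := hXle _ (by omega)
        have h3 : |X (P+m)| ≤ |V (P+m)| := hXle _ (by omega)
        have h4 : |V (P+m+1)| ≤ ρ * |V (P+m)| := hcontract _ (by omega)
        calc |g| ^ (P + m) * |w0| = |(-g) ^ (P+m) * w0| := h0.symm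
          _ = |X (P + m + 1) * V (P + m) - X (P + m) * V (P + m + 1)| := by rw [hcas]
          _ ≤ |X (P+m+1)| * |V (P+m)| + |X (P+m)| * |V (P+m+1)| := h1
          _ ≤ 2 * ρ * |V (P + m)| ^ 2 := by
              nlinarith [abs_nonneg (V (P+m)), abs_nonneg (V (P+m+1)), abs_nonneg (X (P+m))]
      have h9 : |g| ^ (P + m) * |w0| ≤ 2 * ρ * (|g|/4) ^ m * |V P| ^ 2 := by
        have h8 : |V (P + m)| ^ 2 ≤ (ρ ^ m * |V P|) ^ 2 := by
          nlinarith [hVdecay m, abs_nonneg (V (P + m)), abs_nonneg (V P),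
            pow_pos hρpos m]
        calc |g| ^ (P + m) * |w0| ≤ 2 * ρ * |V (P + m)| ^ 2 := habs
          _ ≤ 2 * ρ * (ρ ^ m * |V P|) ^ 2 := by nlinarith
          _ = 2 * ρ * (ρ^2) ^ m * |V P| ^ 2 := by ring
          _ = 2 * ρ * (|g|/4) ^ m * |V P| ^ 2 := by rw [hρsq]
      have hgm : (0:ℝ) < |g| ^ m := pow_pos hgpos m
      have h12 : |g| ^ P * |w0| * |g| ^ m ≤ 2 * ρ * |V P| ^ 2 * (1/4:ℝ) ^ m * |g| ^ m := by
        calc |g| ^ P * |w0| * |g| ^ m = |g| ^ (P + m) * |w0| := by rw [pow_add]; ring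
          _ ≤ 2 * ρ * (|g|/4) ^ m * |V P| ^ 2 := h9
          _ = 2 * ρ * |V P| ^ 2 * (1/4:ℝ) ^ m * |g| ^ m := by
              rw [show (|g|/4:ℝ) ^ m = |g| ^ m * (1/4:ℝ) ^ m by
                rw [div_eq_mul_one_div, mul_pow]]
              ring
      exact le_of_mul_le_mul_right h12 hgm
    have hlim2 : Tendsto (fun m : ℕ => 2 * ρ * |V P| ^ 2 * (1/4 : ℝ) ^ m) atTop (nhds 0) := by
      have h0 : Tendsto (fun m : ℕ => (1/4 : ℝ) ^ m) atTop (nhds 0) :=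
        tendsto_pow_atTop_nhds_zero_of_lt_one (by norm_num) (by norm_num)
      simpa only [mul_zero] using h0.const_mul (2 * ρ * |V P| ^ 2)
    have hc0 : 0 < |g| ^ P * |w0| := by
      have : 0 < |w0| := abs_pos.mpr hw0
      positivity
    obtain ⟨m, hm⟩ := (hlim2.eventually_lt_const hc0).exists
    exact absurd (hbound m) (not_le.mpr hm)
  -- Step 2: from the good index, superexponential growth
  obtain ⟨n₁, hn₁, hVn₁, hmono⟩ := hgood
  have key : ∀ m, V (n₁ + m + 1) ≠ 0 ∧ |V (n₁ + m)| ≤ |V (n₁ + m + 1)| := by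
    intro m
    induction m with
    | zero => exact ⟨hVn₁, hmono⟩
    | succ n ih =>
      have hstep : max R 1 * |V (n₁ + n + 1)| ≤ |V (n₁ + n + 2)| := by
        have hq1 : max R 1 + |g| ≤ |q (n₁ + n)| := hN₀ _ (by omega)
        have hr : q (n₁+n) * V (n₁+n+1) = V (n₁+n+2) - g * V (n₁+n) := by rw [hV (n₁+n)]; ring
        have h1 : |q (n₁+n)| * |V (n₁+n+1)| ≤ |V (n₁+n+2)| + |g| * |V (n₁+n)| := by
          calc |q (n₁+n)| * |V (n₁+n+1)| = |q (n₁+n) * V (n₁+n+1)| := (abs_mul _ _).symm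
            _ = |V (n₁+n+2) - g * V (n₁+n)| := by rw [hr]
            _ ≤ |V (n₁+n+2)| + |g * V (n₁+n)| := abs_sub _ _
            _ = |V (n₁+n+2)| + |g| * |V (n₁+n)| := by rw [abs_mul]
        nlinarith [ih.2, abs_nonneg (V (n₁+n+1)), abs_nonneg (V (n₁+n)), abs_nonneg g]
      have hpos : 0 < |V (n₁ + n + 1)| := abs_pos.mpr ih.1
      have h2 : 0 < |V (n₁ + n + 2)| := by
        have h3 : (1:ℝ) ≤ max R 1 := le_max_right _ _
        nlinarith
      show V (n₁ + n + 2) ≠ 0 ∧ |V (n₁ + n + 1)| ≤ |V (n₁ + n + 2)|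
      refine ⟨abs_pos.mp h2, ?_⟩
      have h4 : (1:ℝ) * |V (n₁+n+1)| ≤ max R 1 * |V (n₁+n+1)| :=
        mul_le_mul_of_nonneg_right (le_max_right _ _) (abs_nonneg _)
      linarith
  refine ⟨n₁ + 1, (key 0).1, ?_⟩
  intro n hn
  obtain ⟨m, rfl⟩ := Nat.exists_eq_add_of_le hn
  constructor
  · have h1 := (key (m + 1)).1
    have he : n₁ + 1 + m + 1 = n₁ + (m + 1) + 1 := by omega
    rw [he]; exact h1
  · have hq1 : max R 1 + |g| ≤ |q (n₁ + m)| := hN₀ _ (by omega)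
    have hr : q (n₁+m) * V (n₁+m+1) = V (n₁+m+2) - g * V (n₁+m) := by rw [hV (n₁+m)]; ring
    have h1 : |q (n₁+m)| * |V (n₁+m+1)| ≤ |V (n₁+m+2)| + |g| * |V (n₁+m)| := by
      calc |q (n₁+m)| * |V (n₁+m+1)| = |q (n₁+m) * V (n₁+m+1)| := (abs_mul _ _).symm
        _ = |V (n₁+m+2) - g * V (n₁+m)| := by rw [hr]
        _ ≤ |V (n₁+m+2)| + |g * V (n₁+m)| := abs_sub _ _
        _ = |V (n₁+m+2)| + |g| * |V (n₁+m)| := by rw [abs_mul]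
    have h2 := (key m).2
    have h3 : R ≤ max R 1 := le_max_left _ _
    have he1 : n₁ + 1 + m = n₁ + m + 1 := by omega
    have he2 : n₁ + 1 + m + 1 = n₁ + m + 2 := by omega
    rw [he1]
    show R * |V (n₁ + m + 1)| ≤ |V (n₁ + m + 2)|
    nlinarith [abs_nonneg (V (n₁+m+1)), abs_nonneg (V (n₁+m)), abs_nonneg g]

lemma rec_decay {q : ℕ → ℝ} {g : ℝ} (hg : g ≠ 0)
    (hq : Tendsto (fun k => |q k|) atTop atTop)
    {X V : ℕ → ℝ} (hX : RecR q g X) (hV : RecR q g V)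
    (hw0 : X 1 * V 0 - X 0 * V 1 ≠ 0)
    (hlim : Tendsto (fun k => X k / V k) atTop (nhds 0))
    (D : ℝ) (hD : 1 ≤ D) :
    Tendsto (fun n : ℕ => D ^ n * |X n|) atTop (nhds 0) := by
  obtain ⟨w0, hw0def⟩ : ∃ w, w = X 1 * V 0 - X 0 * V 1 := ⟨_, rfl⟩
  rw [← hw0def] at hw0
  have hgabs : 0 ≤ |g| := abs_nonneg g
  obtain ⟨R, hRdef⟩ : ∃ R : ℝ, R = D * (|g| + 1) + 1 := ⟨_, rfl⟩
  have hR1 : 1 ≤ R := by nlinarith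
  have hRpos : 0 < R := by linarith
  have hgR : |g| < R := by nlinarith
  have hDgR : D * |g| < R := by nlinarith
  obtain ⟨r, hrdef⟩ : ∃ r : ℝ, r = |g| / R ^ 2 := ⟨_, rfl⟩
  have hr0 : 0 ≤ r := by rw [hrdef]; positivity
  have hr1 : r < 1 := by
    rw [hrdef, div_lt_one (by positivity)]
    nlinarith
  obtain ⟨N, hVN0, hgrow⟩ := rec_growth hg hq hX hV (hw0def ▸ hw0) hlim R hRpos
  have hVnz : ∀ n, N ≤ n → V n ≠ 0 := by
    intro n hn
    rcases Nat.exists_eq_add_of_le hn with ⟨m, rfl⟩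
    rcases Nat.eq_zero_or_pos m with rfl | hm
    · simpa using hVN0
    · have he : N + m = N + (m - 1) + 1 := by omega
      rw [he]; exact (hgrow (N + (m-1)) (by omega)).1
  have hVpos : ∀ n, N ≤ n → 0 < |V n| := fun n hn => abs_pos.mpr (hVnz n hn)
  have hVrel : ∀ n, N ≤ n → ∀ k, R ^ k * |V n| ≤ |V (n + k)| := by
    intro n hn k
    induction k with
    | zero => simp
    | succ m ih =>
      have h1 : R * |V (n + m)| ≤ |V (n + m + 1)| := (hgrow (n + m) (by omega)).2
      have h2 : R * (R ^ m * |V n|) ≤ R * |V (n + m)| :=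
        mul_le_mul_of_nonneg_left ih (le_of_lt hRpos)
      have he : n + (m + 1) = n + m + 1 := by omega
      rw [he]
      calc R ^ (m+1) * |V n| = R * (R ^ m * |V n|) := by ring
        _ ≤ |V (n + m + 1)| := le_trans h2 h1
  have hdiff : ∀ k, N ≤ k → X (k+1) / V (k+1) - X k / V k = ((-g)^k * w0) / (V k * V (k+1)) := by
    intro k hk
    have h1 := casoratian hX hV k
    rw [← hw0def] at h1
    have hk1 : V k ≠ 0 := hVnz k hk
    have hk2 : V (k+1) ≠ 0 := hVnz (k+1) (by omega)
    have e : X (k+1) / V (k+1) - X k / V k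
        = (X (k+1) * V k - X k * V (k+1)) / (V k * V (k+1)) := by
      field_simp
    rw [e, h1]
  -- main pointwise bound
  have hXbound : ∀ n, N ≤ n →
      |X n| ≤ (|w0| * R ^ N / (R * (1 - r) * |V N|)) * (|g| / R) ^ n := by
    intro n hn
    obtain ⟨c, hcdef⟩ : ∃ c, c = |V n| := ⟨_, rfl⟩
    have hcpos : 0 < c := by rw [hcdef]; exact hVpos n hn
    obtain ⟨Bc, hBcdef⟩ : ∃ B : ℝ, B = |g| ^ n * |w0| / (R * c ^ 2) := ⟨_, rfl⟩
    have hBc0 : 0 ≤ Bc := by rw [hBcdef]; positivity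
    have hterm : ∀ k, |((-g)^(n+k) * w0) / (V (n+k) * V (n+k+1))| ≤ Bc * r ^ k := by
      intro k
      have hd1 : R ^ k * c ≤ |V (n + k)| := by rw [hcdef]; exact hVrel n hn k
      have hd2 : R ^ (k+1) * c ≤ |V (n + k + 1)| := by
        have := hVrel n hn (k+1)
        have he : n + (k+1) = n + k + 1 := by omega
        rw [hcdef]; rwa [he] at this
      have hdpos : 0 < R ^ k * c * (R ^ (k+1) * c) := by positivity
      have habs : |((-g)^(n+k) * w0) / (V (n+k) * V (n+k+1))|
          = |g| ^ (n+k) * |w0| / (|V (n+k)| * |V (n+k+1)|) := by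
        rw [abs_div, abs_mul, abs_mul, abs_pow, abs_neg]
      rw [habs]
      have hmono : |g| ^ (n+k) * |w0| / (|V (n+k)| * |V (n+k+1)|)
          ≤ |g| ^ (n+k) * |w0| / (R ^ k * c * (R ^ (k+1) * c)) := by
        apply div_le_div_of_nonneg_left (by positivity) hdpos
        exact mul_le_mul hd1 hd2 (le_of_lt (by positivity)) (abs_nonneg _)
      refine le_trans hmono (le_of_eq ?_)
      rw [hBcdef, hrdef, div_pow, pow_add]
      field_simp
      ring
    have htel : ∀ m, |X n / V n| ≤ |X (n+m) / V (n+m)| + (Finset.range m).sum (fun k => Bc * r ^ k) := by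
      intro m
      induction m with
      | zero => simp
      | succ m ih =>
        have h1 : |X (n+m) / V (n+m)| ≤ |X (n+m+1) / V (n+m+1)| + Bc * r ^ m := by
          have h2 := hdiff (n+m) (by omega)
          have h3 : X (n+m) / V (n+m)
              = X (n+m+1) / V (n+m+1) - ((-g)^(n+m) * w0) / (V (n+m) * V (n+m+1)) := by
            rw [← h2]; ring
          rw [h3]
          refine le_trans (abs_sub _ _) ?_
          exact add_le_add (le_refl _) (hterm m)
        rw [Finset.sum_range_succ]
        have he : n + (m+1) = n + m + 1 := by omega
        rw [he]
        linarith
    have hgeom : ∀ m, (Finset.range m).sum (fun k => Bc * r ^ k) ≤ Bc / (1 - r) := by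
      intro m
      rw [← Finset.mul_sum]
      have h1 : (Finset.range m).sum (fun k => r ^ k) ≤ 1 / (1 - r) := by
        have h2 : ∀ k, k ∈ Finset.range m → r ^ k = r ^ k := fun _ _ => rfl
        calc (Finset.range m).sum (fun k => r ^ k) = (1 - r ^ m) / (1 - r) := by
              rw [geom_sum_eq (ne_of_lt hr1)]
              rw [div_eq_div_iff (by linarith) (by linarith)]
              ring
          _ ≤ 1 / (1 - r) := by
              have hm1 : 1 - r ^ m ≤ 1 := by nlinarith [pow_nonneg hr0 m]
              exact (div_le_div_iff_of_pos_right (by linarith)).mpr hm1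
      calc Bc * (Finset.range m).sum (fun k => r ^ k) ≤ Bc * (1 / (1 - r)) :=
            mul_le_mul_of_nonneg_left h1 hBc0
        _ = Bc / (1 - r) := by ring
    have hzero : Tendsto (fun m : ℕ => |X (n+m) / V (n+m)|) atTop (nhds 0) := by
      have h1 : Tendsto (fun m : ℕ => X (m+n) / V (m+n)) atTop (nhds 0) :=
        hlim.comp (tendsto_add_atTop_nat n)
      have h2 : Tendsto (fun m : ℕ => |X (m+n) / V (m+n)|) atTop (nhds 0) := by
        simpa using h1.abs
      simpa [add_comm] using h2
    have hratio : |X n / V n| ≤ Bc / (1 - r) := by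
      have h1 : ∀ m : ℕ, |X n / V n| - Bc / (1 - r) ≤ |X (n+m) / V (n+m)| := by
        intro m
        have := htel m
        have := hgeom m
        linarith
      have h2 := ge_of_tendsto hzero (Filter.Eventually.of_forall h1)
      linarith
    -- |X n| ≤ (Bc/(1-r)) * c
    have hXn : |X n| ≤ Bc / (1 - r) * c := by
      have h1 : |X n / V n| = |X n| / c := by rw [abs_div, ← hcdef]
      rw [h1, div_le_iff₀ hcpos] at hratio
      linarith [hratio]
    -- now c ≥ R^(n-N) |V N|
    obtain ⟨j, rfl⟩ := Nat.exists_eq_add_of_le hn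
    have hclow : R ^ j * |V N| ≤ c := by rw [hcdef]; exact hVrel N le_rfl j
    have hVNpos : 0 < |V N| := hVpos N le_rfl
    have h1r : 0 < 1 - r := by linarith
    -- Bc/(1-r)*c = |g|^n |w0| /(R (1-r) c) ≤ |g|^n |w0|/(R(1-r) R^j |V N|)
    have hfin : Bc / (1 - r) * c ≤ |w0| * R ^ N / (R * (1 - r) * |V N|) * (|g| / R) ^ (N + j) := by
      have he1 : Bc / (1 - r) * c = |g| ^ (N+j) * |w0| / (R * (1 - r) * c) := by
        rw [hBcdef]; field_simp
      have he2 : |w0| * R ^ N / (R * (1 - r) * |V N|) * (|g| / R) ^ (N + j)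
          = |g| ^ (N+j) * |w0| / (R * (1 - r) * (R ^ j * |V N|)) := by
        rw [div_pow, pow_add, pow_add]
        have h1r : (0:ℝ) < 1 - r := by linarith
        have := hVpos N le_rfl
        field_simp
      rw [he1, he2]
      apply div_le_div_of_nonneg_left (by positivity) (by positivity)
      have : R * (1-r) * (R ^ j * |V N|) ≤ R * (1-r) * c :=
        mul_le_mul_of_nonneg_left hclow (by positivity)
      linarith
    exact le_trans hXn hfin
  -- squeeze
  obtain ⟨E, hEdef⟩ : ∃ E, E = |w0| * R ^ N / (R * (1 - r) * |V N|) := ⟨_, rfl⟩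
  have hE0 : 0 ≤ E := by
    have h1r : 0 < 1 - r := by linarith
    have := hVpos N le_rfl
    rw [hEdef]; positivity
  have hsq : ∀ n, N ≤ n → D ^ n * |X n| ≤ E * (D * |g| / R) ^ n := by
    intro n hn
    have h1 := hEdef ▸ hXbound n hn
    have h2 : D ^ n * |X n| ≤ D ^ n * (E * (|g| / R) ^ n) := by
      apply mul_le_mul_of_nonneg_left h1 (by positivity)
    refine le_trans h2 (le_of_eq ?_)
    rw [div_pow, div_pow, mul_pow]
    field_simp
  have hlimE : Tendsto (fun n : ℕ => E * (D * |g| / R) ^ n) atTop (nhds 0) := by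
    have h1 : Tendsto (fun n : ℕ => (D * |g| / R) ^ n) atTop (nhds 0) := by
      apply tendsto_pow_atTop_nhds_zero_of_lt_one (by positivity)
      rw [div_lt_one hRpos]; exact hDgR
    simpa only [mul_zero] using h1.const_mul E
  apply squeeze_zero' (Filter.Eventually.of_forall (fun n => by positivity))
    ?_ hlimE
  filter_upwards [eventually_ge_atTop N] with n hn
  exact hsq n hn

def recSeq (β1 β0 γ0 a b : ℚ) : ℕ → ℚ
  | 0 => a
  | 1 => b
  | (k+2) => (β1 * (k+1) + β0) * recSeq β1 β0 γ0 a b (k+1) + γ0 * recSeq β1 β0 γ0 a b k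

lemma recSeq_int (β1 β0 γ0 a b : ℚ) :
    ∀ k : ℕ, ∃ m : ℤ, ((a.den * b.den : ℤ) : ℚ) *
      ((β1.den * β0.den * γ0.den : ℤ) : ℚ) ^ k * recSeq β1 β0 γ0 a b k = (m : ℚ) := by
  have hden : ∀ q : ℚ, ((q.den : ℕ) : ℚ) * q = (q.num : ℚ) :=
    fun q => by exact_mod_cast Rat.den_mul_eq_num q
  obtain ⟨A1, hA1⟩ : ∃ A : ℤ, ((β1.den * β0.den * γ0.den : ℤ) : ℚ) * β1 = A :=
    ⟨β1.num * (β0.den * γ0.den), by push_cast; linear_combination ((β0.den:ℚ) * (γ0.den:ℚ)) * hden β1⟩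
  obtain ⟨A0, hA0⟩ : ∃ A : ℤ, ((β1.den * β0.den * γ0.den : ℤ) : ℚ) * β0 = A :=
    ⟨β0.num * (β1.den * γ0.den), by push_cast; linear_combination ((β1.den:ℚ) * (γ0.den:ℚ)) * hden β0⟩
  obtain ⟨G, hG⟩ : ∃ A : ℤ, ((β1.den * β0.den * γ0.den : ℤ) : ℚ) * γ0 = A :=
    ⟨γ0.num * (β1.den * β0.den), by push_cast; linear_combination ((β1.den:ℚ) * (β0.den:ℚ)) * hden γ0⟩
  set d : ℤ := β1.den * β0.den * γ0.den with hd
  set N : ℤ := a.den * b.den with hN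
  have key : ∀ k : ℕ, (∃ m : ℤ, (N:ℚ) * (d:ℚ) ^ k * recSeq β1 β0 γ0 a b k = (m : ℚ)) ∧
      (∃ m : ℤ, (N:ℚ) * (d:ℚ) ^ (k+1) * recSeq β1 β0 γ0 a b (k+1) = (m : ℚ)) := by
    intro k
    induction k with
    | zero =>
      constructor
      · refine ⟨a.num * b.den, ?_⟩
        show (N:ℚ) * (d:ℚ) ^ 0 * a = _
        rw [hN]; push_cast
        linear_combination (b.den:ℚ) * hden a
      · refine ⟨b.num * a.den * d, ?_⟩
        show (N:ℚ) * (d:ℚ) ^ 1 * b = _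
        rw [hN]; push_cast
        linear_combination ((a.den:ℚ) * (d:ℚ)) * hden b
    | succ k ih =>
      refine ⟨ih.2, ?_⟩
      obtain ⟨m0, hm0⟩ := ih.1
      obtain ⟨m1, hm1⟩ := ih.2
      refine ⟨(A1 * (k+1) + A0) * m1 + G * d * m0, ?_⟩
      show (N:ℚ) * (d:ℚ) ^ (k+2) * ((β1 * (k+1) + β0) * recSeq β1 β0 γ0 a b (k+1)
          + γ0 * recSeq β1 β0 γ0 a b k) = _
      push_cast
      linear_combination ((d:ℚ) * (β1 * ((k:ℚ)+1) + β0)) * hm1 + ((d:ℚ)^2 * γ0) * hm0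
        + (((k:ℚ)+1) * (m1:ℚ)) * hA1 + ((m1:ℚ)) * hA0 + ((d:ℚ) * (m0:ℚ)) * hG
  exact fun k => (key k).1

/-- Let `β1, β0, γ0 ∈ ℚ` with `β1 ≠ 0`, `γ0 ≠ 0` and `β1 n + β0 ≠ 0` for
all integers `n ≥ 0`. If `u` is a minimal solution of
`u n = (β1 n + β0) u (n-1) + γ0 u (n-2)` (`n ≥ 1`), then `u (-1) ≠ 0` and `u 0 / u (-1)`
is irrational. -/
theorem stmt_18 (β1 β0 γ0 : ℚ) (hβ1 : β1 ≠ 0) (hγ0 : γ0 ≠ 0)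
    (hβ : ∀ n : ℤ, 0 ≤ n → β1 * (n : ℚ) + β0 ≠ 0) (u : ℤ → ℝ)
    (hmin : IsMinimal (fun _ => 1) (fun n => (β1 : ℝ) * (n : ℝ) + (β0 : ℝ))
      (fun _ => (γ0 : ℝ)) u) :
    u (-1) ≠ 0 ∧ Irrational (u 0 / u (-1)) := by
  obtain ⟨hu, hnt, v, hv, hind, htend⟩ := hmin
  have hβ1r : (β1 : ℝ) ≠ 0 := by exact_mod_cast hβ1
  have hγ0r : (γ0 : ℝ) ≠ 0 := by exact_mod_cast hγ0
  set qf : ℕ → ℝ := fun k => (β1 : ℝ) * ((k : ℝ) + 1) + (β0 : ℝ) with hqfdef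
  set U : ℕ → ℝ := fun k => u ((k : ℤ) - 1) with hUdef
  set V : ℕ → ℝ := fun k => v ((k : ℤ) - 1) with hVdef
  have hUeq : ∀ k : ℕ, U k = u ((k : ℤ) - 1) := fun _ => rfl
  have hVeq : ∀ k : ℕ, V k = v ((k : ℤ) - 1) := fun _ => rfl
  -- transfer solutions
  have hsol : ∀ w : ℤ → ℝ, IsSol (fun _ => 1) (fun n => (β1 : ℝ) * (n : ℝ) + (β0 : ℝ))
      (fun _ => (γ0 : ℝ)) w → RecR qf (γ0 : ℝ) (fun k => w ((k : ℤ) - 1)) := by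
    intro w hw k
    have h := hw ((k : ℤ) + 1) (by omega)
    simp only [one_mul] at h
    have e2 : (((k + 2 : ℕ)) : ℤ) - 1 = (k : ℤ) + 1 := by push_cast; ring
    have e1 : (((k + 1 : ℕ)) : ℤ) - 1 = (k : ℤ) + 1 - 1 := by push_cast; ring
    have e0 : (((k : ℕ)) : ℤ) - 1 = (k : ℤ) + 1 - 2 := by push_cast; ring
    show w ((((k + 2 : ℕ))) - 1) = qf k * w ((((k + 1 : ℕ))) - 1) + (γ0:ℝ) * w (((k:ℕ)) - 1)
    rw [e2, e1, e0, h, hqfdef]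
    push_cast
    ring
  have hU : RecR qf (γ0 : ℝ) U := hsol u hu
  have hV' : RecR qf (γ0 : ℝ) V := hsol v hv
  -- scalar multiples are solutions
  have hCsol : ∀ (c : ℝ) (W : ℕ → ℝ), RecR qf (γ0:ℝ) W → RecR qf (γ0:ℝ) (fun k => c * W k) := by
    intro c W hW k
    simp only
    rw [hW k]
    ring
  -- zero is a solution
  have hZsol : RecR qf (γ0:ℝ) (fun _ => 0) := by intro k; simp
  -- nontriviality
  have hUnt : ∃ k : ℕ, U k ≠ 0 := by
    obtain ⟨n, hn, hne⟩ := hnt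
    refine ⟨(n + 1).toNat, ?_⟩
    rw [hUeq, show (((n + 1).toNat : ℕ) : ℤ) - 1 = n by omega]
    exact hne
  have hUnz : ¬(U 0 = 0 ∧ U 1 = 0) := by
    rintro ⟨h0, h1⟩
    obtain ⟨k, hk⟩ := hUnt
    exact hk (rec_unique hU hZsol h0 h1 k)
  -- lin indep transfer
  have hlinN : ∀ c d : ℝ, (∀ k : ℕ, c * U k + d * V k = 0) → c = 0 ∧ d = 0 := by
    intro c d h
    apply hind
    intro n hn
    have h2 := h (n + 1).toNat
    rw [hUeq, hVeq, show (((n + 1).toNat : ℕ) : ℤ) - 1 = n by omega] at h2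
    exact h2
  -- tendsto transfer
  have htendN : Tendsto (fun k : ℕ => U k / V k) atTop (nhds 0) := by
    apply (tendsto_add_atTop_iff_nat 1).mp
    have he : (fun k : ℕ => U (k + 1) / V (k + 1)) = fun n : ℕ => u (n : ℤ) / v (n : ℤ) := by
      funext k
      rw [hUeq, hVeq, show (((k + 1 : ℕ)) : ℤ) - 1 = (k : ℤ) by push_cast; ring]
    exact he ▸ htend
  -- |qf| → ∞
  have hqten : Tendsto (fun k => |qf k|) atTop atTop := by
    have t0 : Tendsto (fun k : ℕ => (k : ℝ)) atTop atTop := tendsto_natCast_atTop_atTop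
    have t1 : Tendsto (fun k : ℕ => |(β1:ℝ)| * ((k : ℝ) + 1) - |(β0:ℝ)|) atTop atTop := by
      apply tendsto_atTop_add_const_right
      exact (tendsto_atTop_add_const_right _ 1 t0).const_mul_atTop (abs_pos.mpr hβ1r)
    apply tendsto_atTop_mono ?_ t1
    intro k
    have h1 : |(β1:ℝ) * ((k:ℝ)+1)| ≤ |qf k| + |(β0:ℝ)| := by
      calc |(β1:ℝ) * ((k:ℝ)+1)| = |qf k - (β0:ℝ)| := by rw [hqfdef]; ring_nf
        _ ≤ |qf k| + |(β0:ℝ)| := abs_sub _ _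
    have h2 : |(β1:ℝ) * ((k:ℝ)+1)| = |(β1:ℝ)| * ((k:ℝ)+1) := by
      rw [abs_mul, abs_of_nonneg (by positivity : (0:ℝ) ≤ (k:ℝ)+1)]
    linarith
  -- main contradiction setup
  by_contra hcon
  rw [not_and_or] at hcon
  -- the rational solution data
  have hkey : ∃ (a b : ℚ) (c : ℝ), c ≠ 0 ∧ ¬(a = 0 ∧ b = 0) ∧
      (∀ k, U k = c * ((recSeq β1 β0 γ0 a b k : ℚ) : ℝ)) := by
    have hU0 : U 0 = u (-1) := by rw [hUeq]; norm_num
    have hU1 : U 1 = u 0 := by rw [hUeq]; norm_num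
    have hXs : ∀ a b : ℚ, RecR qf (γ0:ℝ) (fun k => ((recSeq β1 β0 γ0 a b k : ℚ) : ℝ)) := by
      intro a b k
      show ((recSeq β1 β0 γ0 a b (k+2) : ℚ) : ℝ) = _
      rw [show recSeq β1 β0 γ0 a b (k+2)
          = (β1 * (k+1) + β0) * recSeq β1 β0 γ0 a b (k+1) + γ0 * recSeq β1 β0 γ0 a b k from rfl]
      rw [hqfdef]
      push_cast
      ring
    rcases eq_or_ne (u (-1)) 0 with h1 | h1
    · refine ⟨0, 1, U 1, ?_, by simp, ?_⟩
      · intro hc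
        exact hUnz ⟨by rw [hU0, h1], hc⟩
      · apply rec_unique hU (hCsol _ _ (hXs 0 1))
        · simp [recSeq, hU0, h1]
        · simp [recSeq]
    · have h2 : ¬Irrational (u 0 / u (-1)) := by
        rcases hcon with h | h
        · exact absurd (not_not.mp h) h1
        · exact h
      obtain ⟨s, hs⟩ := not_not.mp h2
      have hu0 : u 0 = (s : ℝ) * u (-1) := by
        rw [hs, div_mul_cancel₀ _ h1]
      refine ⟨1, s, U 0, by rw [hU0]; exact h1, by simp, ?_⟩
      apply rec_unique hU (hCsol _ _ (hXs 1 s))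
      · simp [recSeq]
      · show U 1 = U 0 * ((recSeq β1 β0 γ0 1 s 1 : ℚ) : ℝ)
        rw [show recSeq β1 β0 γ0 1 s 1 = s from rfl, hU0, hU1, hu0]
        ring
  obtain ⟨a, b, c, hc, hab, hUc⟩ := hkey
  set X : ℕ → ℝ := fun k => ((recSeq β1 β0 γ0 a b k : ℚ) : ℝ) with hXdef
  have hX : RecR qf (γ0:ℝ) X := by
    intro k
    show ((recSeq β1 β0 γ0 a b (k+2) : ℚ) : ℝ) = _
    rw [show recSeq β1 β0 γ0 a b (k+2)
        = (β1 * (k+1) + β0) * recSeq β1 β0 γ0 a b (k+1) + γ0 * recSeq β1 β0 γ0 a b k from rfl]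
    rw [hqfdef]
    push_cast
    ring
  have hw0 : X 1 * V 0 - X 0 * V 1 ≠ 0 := by
    intro hz
    have huv : U 1 * V 0 - U 0 * V 1 = 0 := by
      rw [hUc 0, hUc 1]
      linear_combination c * hz
    have hlam : ∃ lam : ℝ, V 0 = lam * U 0 ∧ V 1 = lam * U 1 := by
      rcases not_and_or.mp hUnz with h0 | h0
      · refine ⟨V 0 / U 0, by field_simp, ?_⟩
        field_simp
        linear_combination -huv
      · refine ⟨V 1 / U 1, ?_, by field_simp⟩
        field_simp
        linear_combination huv
    obtain ⟨lam, hV0, hV1⟩ := hlam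
    have hVlam : ∀ k, V k = lam * U k :=
      rec_unique hV' (hCsol lam U hU) hV0 hV1
    have := hlinN lam (-1) (fun k => by rw [hVlam k]; ring)
    exact absurd this.2 (by norm_num)
  have hlimX : Tendsto (fun k => X k / V k) atTop (nhds 0) := by
    have he : (fun k => X k / V k) = fun k => c⁻¹ * (U k / V k) := by
      funext k
      rw [hUc k, mul_div_assoc, inv_mul_cancel_left₀ hc]
    rw [he]
    simpa using htendN.const_mul c⁻¹
  set D : ℝ := ((β1.den * β0.den * γ0.den : ℤ) : ℝ) with hDdef
  have hD : 1 ≤ D := by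
    rw [hDdef]
    have h1 : 1 ≤ β1.den * β0.den * γ0.den :=
      Nat.one_le_iff_ne_zero.mpr (by
        simp [Nat.mul_ne_zero, β1.den_nz, β0.den_nz, γ0.den_nz])
    exact_mod_cast h1
  have hdec := rec_decay hγ0r hqten hX hV' hw0 hlimX D hD
  set Nc : ℝ := ((a.den * b.den : ℤ) : ℝ) with hNcdef
  have hNc1 : 1 ≤ Nc := by
    rw [hNcdef]
    have h1 : 1 ≤ a.den * b.den :=
      Nat.one_le_iff_ne_zero.mpr (by simp [Nat.mul_ne_zero, a.den_nz, b.den_nz])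
    exact_mod_cast h1
  have hNcpos : 0 < Nc := by linarith
  have h2 : Tendsto (fun n : ℕ => Nc * (D ^ n * |X n|)) atTop (nhds 0) := by
    simpa only [mul_zero] using hdec.const_mul Nc
  obtain ⟨K, hK⟩ := (h2.eventually_lt_const one_pos).exists_forall_of_atTop
  have hXzero : ∀ n, K ≤ n → X n = 0 := by
    intro n hn
    obtain ⟨m, hm⟩ := recSeq_int β1 β0 γ0 a b n
    have hmR : Nc * D ^ n * X n = (m : ℝ) := by
      have hcst := congrArg (fun t : ℚ => (t : ℝ)) hm
      push_cast at hcst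
      rw [hNcdef, hDdef]
      show ((a.den * b.den : ℤ) : ℝ) * ((β1.den * β0.den * γ0.den : ℤ) : ℝ) ^ n
          * ((recSeq β1 β0 γ0 a b n : ℚ) : ℝ) = (m : ℝ)
      push_cast
      linear_combination hcst
    have hDn : (0:ℝ) < D ^ n := by positivity
    have habs : |(m : ℝ)| < 1 := by
      rw [← hmR, abs_mul, abs_mul, abs_of_nonneg (le_of_lt hNcpos), abs_of_nonneg (le_of_lt hDn)]
      have := hK n hn
      linarith [this]
    have hm0 : m = 0 := by
      have hq2 : ((|m| : ℤ) : ℝ) < 1 := by push_cast; exact habs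
      have hq3 : |m| < 1 := by exact_mod_cast hq2
      rcases abs_lt.mp hq3 with ⟨h4, h5⟩
      omega
    rw [hm0] at hmR
    push_cast at hmR
    have hne : Nc * D ^ n ≠ 0 := by positivity
    exact (mul_eq_zero.mp hmR).resolve_left hne
  have hz := rec_back_zero hγ0r hX K (hXzero K le_rfl) (hXzero (K+1) (by omega))
  apply hab
  constructor
  · have h := hz.1
    simp only [hXdef] at h
    rw [show recSeq β1 β0 γ0 a b 0 = a from rfl] at h
    exact_mod_cast h
  · have h := hz.2
    simp only [hXdef] at h
    rw [show recSeq β1 β0 γ0 a b 1 = b from rfl] at h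
    exact_mod_cast h
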